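/- arXiv:1911.01561 — 3 statements merged into one kernel-verified Lean document; each statement's English description precedes it below -/
import Mathlib

section
/- Let g : [0,∞) → ℝ be differentiable with g(t) > 0 for all t, and suppose there exist constants c > 0 and γ > 0 such that g'(t) ≤ -c·e^{2γt}·g(t)² for all t ≥ 0. Then for all t ≥ 0, g(t) ≤ (2γ)/(c·(e^{2γt} - 1)). -/
/-- Riccati-type ODE comparison yielding enhanced dissipation:
if `g > 0` is differentiable with `g' ≤ -c e^{2γt} g²`, then
`g t ≤ 2γ / (c (e^{2γt} - 1))`. -/
theorem stmt0 (g : ℝ → ℝ) (c γ : ℝ) (hc : 0 < c) (hγ : 0 < γ)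
    (hpos : ∀ t : ℝ, 0 ≤ t → 0 < g t)
    (hdiff : ∀ t : ℝ, 0 ≤ t → DifferentiableAt ℝ g t)
    (hineq : ∀ t : ℝ, 0 ≤ t → deriv g t ≤ -c * Real.exp (2 * γ * t) * (g t) ^ 2) :
    ∀ t : ℝ, 0 < t → g t ≤ (2 * γ) / (c * (Real.exp (2 * γ * t) - 1)) := by
  have h2γ : (0:ℝ) < 2 * γ := by linarith
  set h : ℝ → ℝ := fun t => (g t)⁻¹ - c / (2 * γ) * Real.exp (2 * γ * t) with hh
  have hdiffh : ∀ t : ℝ, 0 ≤ t → DifferentiableAt ℝ h t := by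
    intro t ht
    exact ((hdiff t ht).inv (hpos t ht).ne').sub
      ((differentiableAt_const _).mul
        (((differentiableAt_fun_id.const_mul (2*γ)).exp)))
  have hderiv : ∀ t : ℝ, 0 ≤ t → 0 ≤ deriv h t := by
    intro t ht
    have hg := hdiff t ht
    have hgne := (hpos t ht).ne'
    have hd : deriv h t = -deriv g t / (g t)^2 -
        c / (2 * γ) * (Real.exp (2 * γ * t) * (2 * γ)) := by
      rw [hh]
      rw [deriv_fun_sub ((hg.fun_inv hgne)) ((differentiableAt_const _).fun_mul
        ((differentiableAt_fun_id.const_mul (2*γ)).exp))]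
      rw [deriv_fun_inv'' hg hgne, deriv_const_mul _ ((differentiableAt_fun_id.const_mul (2*γ)).exp)]
      have he : deriv (fun x => Real.exp (2 * γ * x)) t
          = Real.exp (2 * γ * t) * (2 * γ) := by
        have := (((hasDerivAt_id t).const_mul (2*γ)).exp).deriv
        simpa [mul_one] using this
      rw [he]
    rw [hd]
    have h1 : -deriv g t ≥ c * Real.exp (2 * γ * t) * (g t)^2 := by
      have := hineq t ht; linarith
    have hg2 : (0:ℝ) < (g t)^2 := pow_pos (hpos t ht) 2
    have h2 : -deriv g t / (g t)^2 ≥ c * Real.exp (2 * γ * t) := by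
      rw [ge_iff_le, le_div_iff₀ hg2]; linarith [h1]
    have h3 : c / (2 * γ) * (Real.exp (2 * γ * t) * (2 * γ)) = c * Real.exp (2 * γ * t) := by
      field_simp
    rw [h3]; linarith
  have hmono : MonotoneOn h (Set.Ici 0) := by
    apply monotoneOn_of_deriv_nonneg (convex_Ici 0)
    · exact fun x hx => (hdiffh x hx).continuousAt.continuousWithinAt
    · intro x hx
      rw [interior_Ici] at hx
      exact (hdiffh x (le_of_lt hx)).differentiableWithinAt
    · intro x hx
      rw [interior_Ici] at hx
      exact hderiv x (le_of_lt hx)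
  intro t ht
  have key : h 0 ≤ h t := hmono (Set.self_mem_Ici) (le_of_lt ht) (le_of_lt ht)
  have h0 : h 0 = (g 0)⁻¹ - c / (2 * γ) := by simp [hh]
  have hgt : h t = (g t)⁻¹ - c / (2 * γ) * Real.exp (2 * γ * t) := rfl
  have hg0 : 0 < (g 0)⁻¹ := inv_pos.mpr (hpos 0 le_rfl)
  have hexp : 1 < Real.exp (2 * γ * t) := by
    rw [← Real.exp_zero]
    exact Real.exp_lt_exp.mpr (by positivity)
  have hden : 0 < c * (Real.exp (2 * γ * t) - 1) := by
    apply mul_pos hc; linarith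
  have hkey2 : c * (Real.exp (2 * γ * t) - 1) / (2 * γ) ≤ (g t)⁻¹ := by
    rw [h0, hgt] at key
    have : c / (2 * γ) * Real.exp (2 * γ * t) - c / (2 * γ) ≤ (g t)⁻¹ - (g 0)⁻¹ := by linarith
    have e : c * (Real.exp (2 * γ * t) - 1) / (2 * γ)
        = c / (2 * γ) * Real.exp (2 * γ * t) - c / (2 * γ) := by ring
    rw [e]; linarith
  have hginv : 0 < (g t)⁻¹ := inv_pos.mpr (hpos t (le_of_lt ht))
  have hkey3 : c * (Real.exp (2 * γ * t) - 1) ≤ (g t)⁻¹ * (2 * γ) :=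
    (div_le_iff₀ h2γ).mp hkey2
  rw [le_div_iff₀ hden]
  calc g t * (c * (Real.exp (2 * γ * t) - 1))
      ≤ g t * ((g t)⁻¹ * (2 * γ)) := by
        apply mul_le_mul_of_nonneg_left hkey3 (le_of_lt (hpos t (le_of_lt ht)))
    _ = 2 * γ := by
        rw [← mul_assoc, mul_inv_cancel₀ (hpos t (le_of_lt ht)).ne', one_mul]
end

section
/- Let Z be a measurable space and P a Markov kernel on Z that factors as P = P_{1/2} ∘ P_{1/2}. Suppose there is a point z* ∈ Z and ε > 0 such that (a) for every bounded measurable φ : Z → ℝ with ‖φ‖_∞ ≤ 1 and all z in the ε-ball around z*, |P_{1/2}φ(z) - P_{1/2}φ(z*)| < 1/2, and (b) there is a set S ⊆ Z and η > 0 with P_{1/2}(z, B_ε(z*)) > η for all z ∈ S. Then for all z₁, z₂ ∈ S, the total variation distance ‖P(z₁,·) - P(z₂,·)‖_{TV} ≤ 1 - η/2. -/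
open ProbabilityTheory MeasureTheory
/-- Quantitative minorization: if `P = P₂ ∘ P₂` with `P₂` locally strong Feller at a
reference point `z*` (condition (a)) and `P₂(z, B_ε(z*)) > η` for all `z ∈ S`
(condition (b)), then transition kernels from points of `S` are at total variation
distance at most `1 - η/2`. -/
theorem stmt3 {Z : Type*} [MeasurableSpace Z] [MetricSpace Z]
    (P P2 : Kernel Z Z) [IsMarkovKernel P] [IsMarkovKernel P2]
    (hfac : P = P2.comp P2)
    (zstar : Z) (ε : ℝ) (hε : 0 < ε)
    (ha : ∀ φ : Z → ℝ, Measurable φ → (∀ z, |φ z| ≤ 1) →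
      ∀ z ∈ Metric.ball zstar ε,
        |(∫ y, φ y ∂(P2 z)) - ∫ y, φ y ∂(P2 zstar)| < 1 / 2)
    (S : Set Z) (η : ℝ) (hη : 0 < η)
    (hb : ∀ z ∈ S, η < (P2 z (Metric.ball zstar ε)).toReal) :
    ∀ z₁ ∈ S, ∀ z₂ ∈ S, ∀ A : Set Z, MeasurableSet A →
      |(P z₁ A).toReal - (P z₂ A).toReal| ≤ 1 - η / 2 := by
  -- Key lower bound: for z ∈ S and measurable A,
  -- P z A ≥ max 0 ((P2 zstar A).toReal - 1/4) * η
  have key : ∀ A : Set Z, MeasurableSet A → ∀ z ∈ S,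
      max 0 ((P2 zstar A).toReal - 4⁻¹) * η ≤ (P z A).toReal := by
    intro A hA z hz
    set c := (P2 zstar A).toReal with hc
    set v := max 0 (c - 4⁻¹) with hv
    have hv0 : (0:ℝ) ≤ v := le_max_left _ _
    -- local strong Feller estimate on the ball
    have hball : ∀ y ∈ Metric.ball zstar ε, |(P2 y A).toReal - c| < 4⁻¹ := by
      intro y hy
      set φ : Z → ℝ := fun x => 2 * A.indicator (fun _ => (1:ℝ)) x - 1 with hφ
      have hφm : Measurable φ :=
        ((measurable_const.indicator hA).const_mul 2).sub measurable_const
      have hφb : ∀ x, |φ x| ≤ 1 := by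
        intro x
        by_cases hx : x ∈ A <;> simp [hφ, Set.indicator, hx] <;> norm_num
      have hint : ∀ w : Z, (∫ x, φ x ∂(P2 w)) = 2 * (P2 w A).toReal - 1 := by
        intro w
        have h1 : Integrable (A.indicator (fun _ => (1:ℝ))) (P2 w) :=
          (integrable_const 1).indicator hA
        rw [hφ]
        rw [integral_sub (h1.const_mul 2) (integrable_const 1),
          integral_const_mul, integral_const]
        have : (∫ x, A.indicator (fun _ => (1:ℝ)) x ∂(P2 w)) = (P2 w A).toReal := by
          simpa [Pi.one_def, Measure.real] using integral_indicator_one (μ := P2 w) hA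
        simp [this]
      have h2 := ha φ hφm hφb y hy
      rw [hint y, hint zstar] at h2
      rw [abs_lt] at h2 ⊢
      constructor <;> [linarith [h2.1]; linarith [h2.2]]
    -- Markov inequality argument
    have hsub : Metric.ball zstar ε ⊆ {y | ENNReal.ofReal v ≤ P2 y A} := by
      intro y hy
      have h1 := hball y hy
      have h2 : v ≤ (P2 y A).toReal := by
        rw [abs_lt] at h1
        rcases max_cases (0:ℝ) (c - 4⁻¹) with ⟨h3, _⟩ | ⟨h3, _⟩ <;>
          simp only [hv, h3] <;> [exact ENNReal.toReal_nonneg; linarith [h1.1]]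
      have : ENNReal.ofReal v ≤ ENNReal.ofReal ((P2 y A).toReal) :=
        ENNReal.ofReal_le_ofReal h2
      rwa [ENNReal.ofReal_toReal (measure_ne_top _ _)] at this
    have hmeas : Measurable fun y => P2 y A := Kernel.measurable_coe P2 hA
    have hmarkov : ENNReal.ofReal v * P2 z (Metric.ball zstar ε) ≤ P z A := by
      calc ENNReal.ofReal v * P2 z (Metric.ball zstar ε)
          ≤ ENNReal.ofReal v * (P2 z) {y | ENNReal.ofReal v ≤ P2 y A} :=
            mul_le_mul_right (measure_mono hsub) _
        _ ≤ ∫⁻ y, P2 y A ∂(P2 z) :=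
            mul_meas_ge_le_lintegral₀ hmeas.aemeasurable _
        _ = P z A := by rw [hfac, Kernel.comp_apply' _ _ _ hA]
    have htr : v * (P2 z (Metric.ball zstar ε)).toReal ≤ (P z A).toReal := by
      have := ENNReal.toReal_mono (measure_ne_top _ _) hmarkov
      rwa [ENNReal.toReal_mul, ENNReal.toReal_ofReal hv0] at this
    calc v * η ≤ v * (P2 z (Metric.ball zstar ε)).toReal :=
          mul_le_mul_of_nonneg_left (hb z hz).le hv0
      _ ≤ (P z A).toReal := htr
  -- finish
  intro z₁ h₁ z₂ h₂ A hA
  have hcompl : ∀ z : Z, (P z A).toReal = 1 - (P z Aᶜ).toReal := by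
    intro z
    have h := prob_add_prob_compl (μ := P z) hA
    have h' := congrArg ENNReal.toReal h
    rw [ENNReal.toReal_add (measure_ne_top _ _) (measure_ne_top _ _)] at h'
    simp at h'
    linarith
  have hc2 : (P2 zstar Aᶜ).toReal = 1 - (P2 zstar A).toReal := by
    have h := prob_add_prob_compl (μ := P2 zstar) hA
    have h' := congrArg ENNReal.toReal h
    rw [ENNReal.toReal_add (measure_ne_top _ _) (measure_ne_top _ _)] at h'
    simp at h'
    linarith
  set c := (P2 zstar A).toReal with hcdef
  have hsum : (2:ℝ)⁻¹ ≤ max 0 (c - 4⁻¹) + max 0 ((1 - c) - 4⁻¹) := by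
    have h1 := le_max_right (0:ℝ) (c - 4⁻¹)
    have h2 := le_max_right (0:ℝ) ((1 - c) - 4⁻¹)
    linarith
  have hmul : η / 2 ≤ (max 0 (c - 4⁻¹) + max 0 ((1 - c) - 4⁻¹)) * η := by
    nlinarith
  have kA1 := key A hA z₁ h₁
  have kA2 := key A hA z₂ h₂
  have kC1 := key Aᶜ hA.compl z₁ h₁
  have kC2 := key Aᶜ hA.compl z₂ h₂
  rw [hc2] at kC1 kC2
  rw [abs_sub_le_iff]
  constructor
  · have e1 := hcompl z₁
    nlinarith [kC1, kA2]
  · have e2 := hcompl z₂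
    nlinarith [kC2, kA1]
end

section
/- Let h : [0,∞) → ℝ≥0 and V : [0,∞) → ℝ≥0 be continuous, Λ > 0, C' > 0, and suppose for all t ≥ 0: e^{Λt}h(t) - h(0) ≤ C'·∫₀ᵗ e^{Λs}V(s) ds, and for some ζ > Λ and C_ζ > 0: e^{Λt}V(t) - V(0) ≤ ∫₀ᵗ e^{Λs}((Λ - ζ)V(s) + C_ζ) ds. If additionally ζ - Λ ≥ C', then the sum W(t) = h(t) + V(t) satisfies W(t) ≤ e^{-Λt}W(0) + C_ζ/Λ for all t ≥ 0. -/
/-- Combining an approximate-eigenfunction inequality for `h` with an integrated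
super-Lyapunov inequality for `V`: if `ζ - Λ ≥ C'`, then `W = h + V` satisfies the
drift bound `W(t) ≤ e^{-Λt} W(0) + C_ζ/Λ`. -/
theorem stmt16 (h V : ℝ → ℝ) (Λ C' ζ Cζ : ℝ)
    (hh : ContinuousOn h (Set.Ici (0:ℝ))) (hV : ContinuousOn V (Set.Ici (0:ℝ)))
    (hhnn : ∀ t : ℝ, 0 ≤ t → 0 ≤ h t) (hVnn : ∀ t : ℝ, 0 ≤ t → 0 ≤ V t)
    (hΛ : 0 < Λ) (hC' : 0 < C') (hCζ : 0 < Cζ) (hζ : Λ < ζ)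
    (h1 : ∀ t : ℝ, 0 ≤ t →
      Real.exp (Λ * t) * h t - h 0 ≤ C' * ∫ s in (0:ℝ)..t, Real.exp (Λ * s) * V s)
    (h2 : ∀ t : ℝ, 0 ≤ t →
      Real.exp (Λ * t) * V t - V 0 ≤
        ∫ s in (0:ℝ)..t, Real.exp (Λ * s) * ((Λ - ζ) * V s + Cζ))
    (habs : C' ≤ ζ - Λ) :
    ∀ t : ℝ, 0 ≤ t → h t + V t ≤ Real.exp (-Λ * t) * (h 0 + V 0) + Cζ / Λ := by
  intro t ht
  set E := Real.exp (Λ * t) with hE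
  have hEpos : 0 < E := Real.exp_pos _
  have hsub : Set.uIcc (0:ℝ) t ⊆ Set.Ici (0:ℝ) := by
    rw [Set.uIcc_of_le ht]
    exact fun x hx => hx.1
  have hexpcont : ContinuousOn (fun s : ℝ => Real.exp (Λ * s)) (Set.uIcc (0:ℝ) t) :=
    (Real.continuous_exp.comp (continuous_const.mul continuous_id)).continuousOn
  have I1 : IntervalIntegrable (fun s => Real.exp (Λ * s) * V s) MeasureTheory.volume 0 t :=
    (hexpcont.mul (hV.mono hsub)).intervalIntegrable
  have I2 : IntervalIntegrable (fun s => Real.exp (Λ * s) * ((Λ - ζ) * V s + Cζ))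
      MeasureTheory.volume 0 t :=
    (hexpcont.mul ((continuousOn_const.mul (hV.mono hsub)).add continuousOn_const)).intervalIntegrable
  have I3 : IntervalIntegrable (fun s => Real.exp (Λ * s) * Cζ) MeasureTheory.volume 0 t :=
    (hexpcont.mul continuousOn_const).intervalIntegrable
  -- combine the two integrals and bound pointwise
  have key : C' * (∫ s in (0:ℝ)..t, Real.exp (Λ * s) * V s)
      + (∫ s in (0:ℝ)..t, Real.exp (Λ * s) * ((Λ - ζ) * V s + Cζ))
      ≤ ∫ s in (0:ℝ)..t, Real.exp (Λ * s) * Cζ := by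
    rw [← intervalIntegral.integral_const_mul]
    rw [← intervalIntegral.integral_add (I1.const_mul C') I2]
    apply intervalIntegral.integral_mono_on ht ((I1.const_mul C').add I2) I3
    intro s hs
    have hVs : 0 ≤ V s := hVnn s hs.1
    have hes : 0 < Real.exp (Λ * s) := Real.exp_pos _
    have : C' * (Real.exp (Λ * s) * V s) + Real.exp (Λ * s) * ((Λ - ζ) * V s + Cζ)
        = Real.exp (Λ * s) * Cζ + Real.exp (Λ * s) * ((C' + (Λ - ζ)) * V s) := by ring
    rw [this]
    have hle : (C' + (Λ - ζ)) * V s ≤ 0 :=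
      mul_nonpos_of_nonpos_of_nonneg (by linarith) hVs
    nlinarith [mul_nonpos_of_nonneg_of_nonpos hes.le hle]
  -- compute the exponential integral
  have hexp : (∫ s in (0:ℝ)..t, Real.exp (Λ * s)) = (E - 1) / Λ := by
    rw [intervalIntegral.integral_comp_mul_left (fun x => Real.exp x) (ne_of_gt hΛ)]
    rw [mul_zero, integral_exp, smul_eq_mul, hE]
    field_simp
    rw [Real.exp_zero]
  have hint : (∫ s in (0:ℝ)..t, Real.exp (Λ * s) * Cζ) = Cζ * (E - 1) / Λ := by
    rw [intervalIntegral.integral_mul_const, hexp]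
    ring
  have hE1 : Cζ * (E - 1) / Λ ≤ Cζ / Λ * E := by
    have h2 : Cζ / Λ * E = Cζ * E / Λ := by ring
    rw [h2, div_le_div_iff₀ hΛ hΛ]
    nlinarith
  have hmain : E * (h t + V t) - (h 0 + V 0) ≤ Cζ / Λ * E := by
    have := h1 t ht
    have := h2 t ht
    nlinarith [key, hint]
  have hfin : h t + V t ≤ (h 0 + V 0) / E + Cζ / Λ := by
    rw [div_add' _ _ _ (ne_of_gt hEpos), le_div_iff₀ hEpos]
    nlinarith
  have : Real.exp (-Λ * t) * (h 0 + V 0) = (h 0 + V 0) / E := by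
    rw [hE, eq_div_iff (ne_of_gt hEpos), mul_right_comm, ← Real.exp_add]
    simp
  linarith [hfin, this.ge, this.le]
end
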